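/- For each fixed q > 0, the generating functions g₁ = 1, g₂ = u_x, g₃ = (q − u_x)·u − (1 + q·u_x)·x satisfy the A_{3.9} commutation relations under the contact bracket: [g₁,g₂] = 0, [g₁,g₃] = q·g₁ − g₂, [g₂,g₃] = g₁ + q·g₂. -/

import Mathlib

/-- Partial derivative in direction `i` of a function on `ℝ⁵ = Fin 5 → ℝ`.
Coordinates: 0 = t, 1 = x, 2 = u, 3 = p (= u_t), 4 = q (= u_x). -/
noncomputable def pd (i : Fin 5) (f : (Fin 5 → ℝ) → ℝ) (v : Fin 5 → ℝ) : ℝ :=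
  fderiv ℝ f v (Pi.single i 1)

/-- The contact bracket of two generating functions. -/
noncomputable def cbracket (f g : (Fin 5 → ℝ) → ℝ) (v : Fin 5 → ℝ) : ℝ :=
  (pd 3 g v * pd 2 f v - pd 3 f v * pd 2 g v) * v 3
  + (pd 4 g v * pd 2 f v - pd 4 f v * pd 2 g v) * v 4
  + pd 3 g v * pd 0 f v - pd 3 f v * pd 0 g v
  + pd 4 g v * pd 1 f v - pd 4 f v * pd 1 g v
  + f v * pd 2 g v - g v * pd 2 f v

lemma diff_coord (j : Fin 5) (v : Fin 5 → ℝ) :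
    DifferentiableAt ℝ (fun w : Fin 5 → ℝ => w j) v :=
  (differentiable_pi.mp differentiable_id j) v

lemma pd_coord (i j : Fin 5) (v : Fin 5 → ℝ) :
    pd i (fun w => w j) v = if i = j then 1 else 0 := by
  have : (fun w : Fin 5 → ℝ => w j) = (ContinuousLinearMap.proj j : (Fin 5 → ℝ) →L[ℝ] ℝ) := rfl
  rw [pd, this, ContinuousLinearMap.fderiv]
  simp [Pi.single_apply, eq_comm]

lemma pd_const (i : Fin 5) (c : ℝ) (v : Fin 5 → ℝ) : pd i (fun _ => c) v = 0 := by
  simp [pd]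

lemma pd_g3 (q : ℝ) (i : Fin 5) (v : Fin 5 → ℝ) :
    pd i (fun w => (q - w 4) * w 2 - (1 + q * w 4) * w 1) v =
      (-(if i = (4:Fin 5) then (1:ℝ) else 0)) * v 2 + (q - v 4) * (if i = (2:Fin 5) then 1 else 0)
      - (q * (if i = (4:Fin 5) then (1:ℝ) else 0) * v 1 + (1 + q * v 4) * (if i = (1:Fin 5) then 1 else 0)) := by
  have h4 := diff_coord 4 v
  have h2 := diff_coord 2 v
  have h1 := diff_coord 1 v
  rw [pd]
  rw [fderiv_fun_sub (f := fun w : Fin 5 → ℝ => (q - w 4) * w 2) (g := fun w : Fin 5 → ℝ => (1 + q * w 4) * w 1) (((differentiableAt_const q).sub h4).mul h2)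
    (((differentiableAt_const 1).add ((differentiableAt_const q).mul h4)).mul h1)]
  rw [fderiv_fun_mul (c := fun w : Fin 5 → ℝ => q - w 4) (d := fun w : Fin 5 → ℝ => w 2) ((differentiableAt_const q).sub h4) h2,
      fderiv_fun_mul (c := fun w : Fin 5 → ℝ => 1 + q * w 4) (d := fun w : Fin 5 → ℝ => w 1) ((differentiableAt_const 1).add ((differentiableAt_const q).mul h4)) h1,
      fderiv_fun_sub (f := fun _ : Fin 5 → ℝ => q) (g := fun w : Fin 5 → ℝ => w 4) (differentiableAt_const q) h4,
      fderiv_fun_add (f := fun _ : Fin 5 → ℝ => 1) (g := fun w : Fin 5 → ℝ => q * w 4) (differentiableAt_const 1) ((differentiableAt_const q).mul h4),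
      fderiv_fun_mul (c := fun _ : Fin 5 → ℝ => q) (d := fun w : Fin 5 → ℝ => w 4) (differentiableAt_const q) h4]
  have e1 : fderiv ℝ (fun w : Fin 5 → ℝ => w 1) v (Pi.single i 1) = (if i = (1:Fin 5) then (1:ℝ) else 0) := pd_coord i 1 v
  have e2 : fderiv ℝ (fun w : Fin 5 → ℝ => w 2) v (Pi.single i 1) = (if i = (2:Fin 5) then (1:ℝ) else 0) := pd_coord i 2 v
  have e4 : fderiv ℝ (fun w : Fin 5 → ℝ => w 4) v (Pi.single i 1) = (if i = (4:Fin 5) then (1:ℝ) else 0) := pd_coord i 4 v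
  simp only [fderiv_fun_const, Pi.zero_apply, ContinuousLinearMap.zero_apply, e1, e2, e4,
    ContinuousLinearMap.add_apply, ContinuousLinearMap.smul_apply, ContinuousLinearMap.sub_apply,
    smul_eq_mul]
  ring

/-- ⟨1, u_x, (q − u_x)·u − (1 + q·u_x)·x⟩ realizes A_{3.9} for q > 0. -/
theorem A39_realization (q : ℝ) (hq : q > 0) (v : Fin 5 → ℝ) :
    cbracket (fun _ => (1 : ℝ)) (fun w => w 4) v = 0 ∧
    cbracket (fun _ => (1 : ℝ))
        (fun w => (q - w 4) * w 2 - (1 + q * w 4) * w 1) v = q * 1 - v 4 ∧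
    cbracket (fun w => w 4)
        (fun w => (q - w 4) * w 2 - (1 + q * w 4) * w 1) v = 1 + q * v 4 := by
  refine ⟨?_, ?_, ?_⟩ <;>
  · simp (config := { decide := true }) only [cbracket, pd_const, pd_coord, pd_g3,
      if_true, if_false, reduceIte]
    ring
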